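/- For every integer p ≥ 1, setting k = 2p, the identity 8·∑_{j=0}^{p-1} j·(k-j)·C(k,j)² = 4k²·C(2k-2, k-2) − k²·C(k,p)² holds. -/

import Mathlib

open Finset

private def F (p i : ℕ) : ℕ := Nat.choose (2 * p - 1) i * Nat.choose (2 * p - 1) (i + 1)

private lemma vandermonde_shift (m : ℕ) (hm : 1 ≤ m) :
    Nat.choose (2 * m) (m - 1) =
      ∑ i ∈ range m, Nat.choose m i * Nat.choose m (i + 1) := by
  obtain ⟨q, rfl⟩ := Nat.exists_eq_add_of_le hm
  have h := Nat.add_choose_eq (1 + q) (1 + q) q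
  rw [Finset.Nat.sum_antidiagonal_eq_sum_range_succ_mk] at h
  have h2 : (1 + q + (1 + q)) = 2 * (1 + q) := by ring
  rw [h2] at h
  have h3 : (1 + q) - 1 = q := by omega
  rw [h3, h]
  refine Finset.sum_congr (by rw [Nat.succ_eq_add_one, Nat.add_comm]) ?_
  intro i hi
  simp only [Finset.mem_range, Nat.succ_eq_add_one] at hi
  congr 1
  rw [← Nat.choose_symm (show i + 1 ≤ 1 + q by omega)]
  congr 1
  omega

private lemma per_term (p i : ℕ) (hp : 1 ≤ p) :
    (i + 1) * (2 * p - (i + 1)) * Nat.choose (2 * p) (i + 1) ^ 2 =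
      (2 * p) ^ 2 * F p i := by
  have h2p : 2 * p - 1 + 1 = 2 * p := by omega
  have e1 : (i + 1) * Nat.choose (2 * p) (i + 1) = 2 * p * Nat.choose (2 * p - 1) i := by
    have h := Nat.add_one_mul_choose_eq (2 * p - 1) i
    rw [h2p] at h
    rw [h]; ring
  have e2 : (2 * p - (i + 1)) * Nat.choose (2 * p) (i + 1)
      = 2 * p * Nat.choose (2 * p - 1) (i + 1) := by
    have ha := Nat.choose_succ_right_eq (2 * p) (i + 1)
    have hb := Nat.add_one_mul_choose_eq (2 * p - 1) (i + 1)
    rw [h2p] at hb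
    calc (2 * p - (i + 1)) * Nat.choose (2 * p) (i + 1)
        = Nat.choose (2 * p) (i + 1) * (2 * p - (i + 1)) := by ring
      _ = Nat.choose (2 * p) (i + 1 + 1) * (i + 1 + 1) := by rw [ha]
      _ = 2 * p * Nat.choose (2 * p - 1) (i + 1) := by rw [← hb]
  calc (i + 1) * (2 * p - (i + 1)) * Nat.choose (2 * p) (i + 1) ^ 2
      = ((i + 1) * Nat.choose (2 * p) (i + 1)) *
        ((2 * p - (i + 1)) * Nat.choose (2 * p) (i + 1)) := by ring
    _ = (2 * p * Nat.choose (2 * p - 1) i) * (2 * p * Nat.choose (2 * p - 1) (i + 1)) := by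
        rw [e1, e2]
    _ = (2 * p) ^ 2 * F p i := by rw [F]; ring

/-- For every integer `p ≥ 1`, with `k = 2p`,
`8·∑_{j=0}^{p-1} j·(k-j)·C(k,j)² = 4k²·C(2k-2, k-2) − k²·C(k,p)²`. -/
theorem eight_mul_sum_j_mul_sq_choose_even (p : ℕ) (hp : 1 ≤ p) :
    8 * ∑ j ∈ Finset.range p,
        (j : ℤ) * (2 * (p : ℤ) - j) * (Nat.choose (2 * p) j : ℤ) ^ 2
      = 4 * (2 * (p : ℤ)) ^ 2 * (Nat.choose (2 * (2 * p) - 2) (2 * p - 2) : ℤ)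
        - (2 * (p : ℤ)) ^ 2 * (Nat.choose (2 * p) p : ℤ) ^ 2 := by
  have hcast : ∀ j ∈ Finset.range p,
      (j : ℤ) * (2 * (p : ℤ) - j) * (Nat.choose (2 * p) j : ℤ) ^ 2
        = ((j * (2 * p - j) * Nat.choose (2 * p) j ^ 2 : ℕ) : ℤ) := by
    intro j hj
    simp only [Finset.mem_range] at hj
    have : j ≤ 2 * p := by omega
    push_cast [this]
    ring
  rw [Finset.sum_congr rfl hcast, ← Nat.cast_sum]
  -- natural number sum identity
  have key : ∑ j ∈ Finset.range p, j * (2 * p - j) * Nat.choose (2 * p) j ^ 2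
      = (2 * p) ^ 2 * ∑ i ∈ range (p - 1), F p i := by
    obtain ⟨q, hq⟩ := Nat.exists_eq_add_of_le hp
    subst hq
    rw [show 1 + q = q + 1 by ring, Finset.sum_range_succ']
    simp only [Nat.cast_zero, zero_mul, mul_zero, add_zero, Nat.add_sub_cancel]
    rw [Finset.mul_sum]
    exact Finset.sum_congr rfl fun i _ => per_term (q + 1) i (by omega)
  -- symmetry of F
  have hsym : ∀ i ≤ 2 * p - 2, F p (2 * p - 2 - i) = F p i := by
    intro i hi
    have h1 : 2 * p - 2 - i + 1 = 2 * p - 1 - i := by omega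
    have h2 : Nat.choose (2 * p - 1) (2 * p - 2 - i) = Nat.choose (2 * p - 1) (i + 1) := by
      rw [show (2 * p - 2 - i) = 2 * p - 1 - (i + 1) by omega]
      exact Nat.choose_symm (by omega)
    have h3 : Nat.choose (2 * p - 1) (2 * p - 1 - i) = Nat.choose (2 * p - 1) i :=
      Nat.choose_symm (by omega)
    rw [F, F, h1, h2, h3, mul_comm]
  have hT : ∑ i ∈ range (2 * p - 1), F p i
      = 2 * (∑ i ∈ range (p - 1), F p i) + F p (p - 1) := by
    have hsplit : range (2 * p - 1) = range p ∪ Ico p (2 * p - 1) := by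
      rw [Finset.range_eq_Ico, Finset.range_eq_Ico, Finset.Ico_union_Ico_eq_Ico (by omega) (by omega)]
    rw [hsplit, Finset.sum_union (by
      rw [Finset.range_eq_Ico]; exact Finset.Ico_disjoint_Ico_consecutive 0 p (2 * p - 1))]
    have hright : ∑ i ∈ Ico p (2 * p - 1), F p i = ∑ i ∈ range (p - 1), F p i := by
      rw [Finset.sum_Ico_eq_sum_range, show 2 * p - 1 - p = p - 1 by omega,
        ← Finset.sum_range_reflect]
      refine Finset.sum_congr rfl ?_
      intro j hj
      simp only [Finset.mem_range] at hj
      rw [show p + (p - 1 - 1 - j) = 2 * p - 2 - j by omega]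
      exact hsym j (by omega)
    have hleft : ∑ i ∈ range p, F p i = ∑ i ∈ range (p - 1), F p i + F p (p - 1) := by
      have h := Finset.sum_range_succ (F p) (p - 1)
      rwa [show p - 1 + 1 = p by omega] at h
    rw [hright, hleft]
    ring
  -- Vandermonde
  have hvdm : Nat.choose (2 * (2 * p) - 2) (2 * p - 2)
      = ∑ i ∈ range (2 * p - 1), F p i := by
    have h := vandermonde_shift (2 * p - 1) (by omega)
    rw [show 2 * (2 * p - 1) = 2 * (2 * p) - 2 by omega,
      show 2 * p - 1 - 1 = 2 * p - 2 by omega] at h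
    exact h
  -- central binomial
  have hmid : Nat.choose (2 * p) p ^ 2 = 4 * F p (p - 1) := by
    have hs : Nat.choose (2 * p - 1) p = Nat.choose (2 * p - 1) (p - 1) := by
      rw [show p - 1 = 2 * p - 1 - p by omega]
      exact (Nat.choose_symm (show p ≤ 2 * p - 1 by omega)).symm
    have hrec : Nat.choose (2 * p) p
        = Nat.choose (2 * p - 1) (p - 1) + Nat.choose (2 * p - 1) p := by
      rw [show 2 * p = (2 * p - 1) + 1 by omega, show p = (p - 1) + 1 by omega,
        Nat.choose_succ_succ]
      simp only [Nat.succ_eq_add_one, Nat.add_sub_cancel]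
    rw [F, show p - 1 + 1 = p by omega, hrec, hs]
    ring
  have main : 8 * ((2 * p) ^ 2 * ∑ i ∈ range (p - 1), F p i)
        + (2 * p) ^ 2 * Nat.choose (2 * p) p ^ 2
      = 4 * (2 * p) ^ 2 * Nat.choose (2 * (2 * p) - 2) (2 * p - 2) := by
    rw [hvdm, hT, hmid]
    ring
  rw [key]
  have main' := congrArg (Nat.cast : ℕ → ℤ) main
  push_cast at main' ⊢
  linarith [main']
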